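/- Given real numbers ū_{i−1}, ū_i, ū_{i+1}, v̄_{i−1}, v̄_i, v̄_{i+1}, there exists a unique real polynomial q₀ of degree at most 5 whose cell average over I_{i+j} equals ū_{i+j} and whose first-order moment over I_{i+j} equals v̄_{i+j} for each j = −1, 0, 1; moreover q₀(x_i + Δx/2) = (13/108)ū_{i−1} + (7/12)ū_i + (8/27)ū_{i+1} + (25/54)v̄_{i−1} + (241/54)v̄_i − (28/27)v̄_{i+1}. -/
import Mathlib


open MeasureTheory Polynomial

/-- Cell average of a polynomial over the cell of width `Δx` centered at `xc`. -/
noncomputable def cellAvg (xc Δx : ℝ) (p : Polynomial ℝ) : ℝ :=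
  (1 / Δx) * ∫ x in (xc - Δx / 2)..(xc + Δx / 2), p.eval x

/-- First-order moment of a polynomial over the cell of width `Δx` centered at `xc`. -/
noncomputable def cellMoment (xc Δx : ℝ) (p : Polynomial ℝ) : ℝ :=
  (1 / Δx) * ∫ x in (xc - Δx / 2)..(xc + Δx / 2), p.eval x * ((x - xc) / Δx)

/- Auxiliary material -/

private theorem polyint (p : Polynomial ℝ) (a b : ℝ) :
    ∫ t in a..b, (derivative p).eval t = p.eval b - p.eval a := by
  apply intervalIntegral.integral_eq_sub_of_hasDerivAt (fun x _ => p.hasDerivAt x)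
  exact ((derivative p).continuous_aeval).intervalIntegrable _ _

private theorem substS (f : ℝ → ℝ) (xi Δx a b : ℝ) (h : Δx ≠ 0) :
    ∫ x in a..b, f ((x - xi) * Δx⁻¹)
      = Δx * ∫ t in (a - xi) * Δx⁻¹..(b - xi) * Δx⁻¹, f t := by
  rw [intervalIntegral.integral_comp_sub_right (fun y => f (y * Δx⁻¹)) xi]
  rw [intervalIntegral.integral_comp_mul_right f (inv_ne_zero h)]
  simp [smul_eq_mul, inv_inv]

private theorem integ6 (f : ℝ → ℝ) (c0 c1 c2 c3 c4 c5 c6 a b : ℝ)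
    (hf : ∀ t, f t = c0 + c1*t + c2*t^2 + c3*t^3 + c4*t^4 + c5*t^5 + c6*t^6) :
    ∫ t in a..b, f t =
      (c0*b + c1/2*b^2 + c2/3*b^3 + c3/4*b^4 + c4/5*b^5 + c5/6*b^6 + c6/7*b^7)
      - (c0*a + c1/2*a^2 + c2/3*a^3 + c3/4*a^4 + c4/5*a^5 + c5/6*a^6 + c6/7*a^7) := by
  set P : Polynomial ℝ := C c0 * X + C (c1/2) * X^2 + C (c2/3) * X^3 + C (c3/4) * X^4
      + C (c4/5) * X^5 + C (c5/6) * X^6 + C (c6/7) * X^7 with hP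
  have hd : ∀ t, f t = (derivative P).eval t := by
    intro t
    rw [hf]
    simp only [hP, derivative_add, derivative_C_mul, derivative_X_pow, derivative_X,
      eval_add, eval_mul, eval_C, eval_X, eval_pow, eval_natCast, mul_one]
    push_cast
    try ring
  rw [intervalIntegral.integral_congr (g := fun t => (derivative P).eval t)
    (fun t _ => hd t), polyint P a b]
  simp only [hP, eval_add, eval_mul, eval_C, eval_X, eval_pow]
  try ring

private noncomputable def Tp (xi Δx : ℝ) : Polynomial ℝ := (X - C xi) * C Δx⁻¹

private noncomputable def Pp (b0 b1 b2 b3 b4 b5 : ℝ) : Polynomial ℝ :=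
  C b0 + C b1 * X + C b2 * X^2 + C b3 * X^3 + C b4 * X^4 + C b5 * X^5

private theorem avg_comp (xi Δx : ℝ) (h : Δx ≠ 0) (c xc : ℝ) (hxc : xc = xi + c * Δx)
    (p : Polynomial ℝ) :
    cellAvg xc Δx (p.comp (Tp xi Δx))
      = ∫ t in (c - 1/2)..(c + 1/2), p.eval t := by
  subst hxc
  unfold cellAvg
  have key : ∀ x : ℝ, (p.comp (Tp xi Δx)).eval x = (fun t => p.eval t) ((x - xi) * Δx⁻¹) := by
    intro x; simp [Tp, eval_comp]
  rw [intervalIntegral.integral_congr (g := fun x => (fun t => p.eval t) ((x - xi) * Δx⁻¹))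
    (fun x _ => key x),
    substS (fun t => p.eval t) xi Δx (xi + c * Δx - Δx / 2) (xi + c * Δx + Δx / 2) h]
  have h1 : (xi + c * Δx - Δx / 2 - xi) * Δx⁻¹ = c - 1/2 := by field_simp; ring
  have h2 : (xi + c * Δx + Δx / 2 - xi) * Δx⁻¹ = c + 1/2 := by field_simp; ring
  rw [h1, h2, ← mul_assoc, one_div, inv_mul_cancel₀ h, one_mul]

private theorem mom_comp (xi Δx : ℝ) (h : Δx ≠ 0) (c xc : ℝ) (hxc : xc = xi + c * Δx)
    (p : Polynomial ℝ) :
    cellMoment xc Δx (p.comp (Tp xi Δx))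
      = ∫ t in (c - 1/2)..(c + 1/2), p.eval t * (t - c) := by
  subst hxc
  unfold cellMoment
  have key : ∀ x : ℝ, (p.comp (Tp xi Δx)).eval x * ((x - (xi + c * Δx)) / Δx)
      = (fun t => p.eval t * (t - c)) ((x - xi) * Δx⁻¹) := by
    intro x
    simp only [Tp, eval_comp, eval_mul, eval_sub, eval_X, eval_C]
    congr 1
    field_simp
    try ring
  rw [intervalIntegral.integral_congr
    (g := fun x => (fun t => p.eval t * (t - c)) ((x - xi) * Δx⁻¹)) (fun x _ => key x),
    substS (fun t => p.eval t * (t - c)) xi Δx (xi + c * Δx - Δx / 2) (xi + c * Δx + Δx / 2) h]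
  have h1 : (xi + c * Δx - Δx / 2 - xi) * Δx⁻¹ = c - 1/2 := by field_simp; ring
  have h2 : (xi + c * Δx + Δx / 2 - xi) * Δx⁻¹ = c + 1/2 := by field_simp; ring
  rw [h1, h2, ← mul_assoc, one_div, inv_mul_cancel₀ h, one_mul]

/-- All the relevant data for the polynomial built from normalized coefficients. -/
private theorem table (xi Δx : ℝ) (h : Δx ≠ 0) (b0 b1 b2 b3 b4 b5 : ℝ) :
    ((Pp b0 b1 b2 b3 b4 b5).comp (Tp xi Δx)).degree ≤ 5 ∧
    ((Pp b0 b1 b2 b3 b4 b5).comp (Tp xi Δx)).eval (xi + Δx/2)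
      = b0 + b1/2 + b2/4 + b3/8 + b4/16 + b5/32 ∧
    cellAvg (xi - Δx) Δx ((Pp b0 b1 b2 b3 b4 b5).comp (Tp xi Δx))
      = b0 - b1 + 13/12*b2 - 5/4*b3 + 121/80*b4 - 91/48*b5 ∧
    cellAvg xi Δx ((Pp b0 b1 b2 b3 b4 b5).comp (Tp xi Δx))
      = b0 + 1/12*b2 + 1/80*b4 ∧
    cellAvg (xi + Δx) Δx ((Pp b0 b1 b2 b3 b4 b5).comp (Tp xi Δx))
      = b0 + b1 + 13/12*b2 + 5/4*b3 + 121/80*b4 + 91/48*b5 ∧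
    cellMoment (xi - Δx) Δx ((Pp b0 b1 b2 b3 b4 b5).comp (Tp xi Δx))
      = 1/12*b1 - 1/6*b2 + 21/80*b3 - 23/60*b4 + 731/1344*b5 ∧
    cellMoment xi Δx ((Pp b0 b1 b2 b3 b4 b5).comp (Tp xi Δx))
      = 1/12*b1 + 1/80*b3 + 1/448*b5 ∧
    cellMoment (xi + Δx) Δx ((Pp b0 b1 b2 b3 b4 b5).comp (Tp xi Δx))
      = 1/12*b1 + 1/6*b2 + 21/80*b3 + 23/60*b4 + 731/1344*b5 := by
  have heval : ∀ t : ℝ, (Pp b0 b1 b2 b3 b4 b5).eval t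
      = b0 + b1*t + b2*t^2 + b3*t^3 + b4*t^4 + b5*t^5 + 0*t^6 := by
    intro t; simp [Pp]; try ring
  refine ⟨?_, ?_, ?_, ?_, ?_, ?_, ?_, ?_⟩
  · have h5 : ((Pp b0 b1 b2 b3 b4 b5).comp (Tp xi Δx)).natDegree ≤ 5 := by
      calc ((Pp b0 b1 b2 b3 b4 b5).comp (Tp xi Δx)).natDegree
          ≤ (Pp b0 b1 b2 b3 b4 b5).natDegree * (Tp xi Δx).natDegree :=
            Polynomial.natDegree_comp_le
        _ ≤ 5 * 1 := by
            apply Nat.mul_le_mul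
            · unfold Pp; compute_degree
            · unfold Tp; compute_degree
        _ = 5 := by norm_num
    exact_mod_cast Polynomial.natDegree_le_iff_degree_le.mp h5
  · have hT : (Tp xi Δx).eval (xi + Δx/2) = 1/2 := by
      simp only [Tp, eval_mul, eval_sub, eval_X, eval_C]
      field_simp
      try ring
    rw [eval_comp, hT, heval]
    norm_num
    try ring
  · rw [avg_comp xi Δx h (-1) (xi - Δx) (by ring), integ6 _ b0 b1 b2 b3 b4 b5 0 _ _ heval]
    norm_num; try ring
  · rw [avg_comp xi Δx h 0 xi (by ring), integ6 _ b0 b1 b2 b3 b4 b5 0 _ _ heval]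
    norm_num; try ring
  · rw [avg_comp xi Δx h 1 (xi + Δx) (by ring), integ6 _ b0 b1 b2 b3 b4 b5 0 _ _ heval]
    norm_num; try ring
  · rw [mom_comp xi Δx h (-1) (xi - Δx) (by ring),
      integ6 _ (b0*1) (b1*1 + b0) (b2*1 + b1) (b3*1 + b2) (b4*1 + b3) (b5*1 + b4) b5 _ _
        (by intro t; rw [heval]; ring)]
    norm_num; try ring
  · rw [mom_comp xi Δx h 0 xi (by ring),
      integ6 _ 0 b0 b1 b2 b3 b4 b5 _ _ (by intro t; rw [heval]; ring)]
    norm_num; try ring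
  · rw [mom_comp xi Δx h 1 (xi + Δx) (by ring),
      integ6 _ (-b0) (b0 - b1) (b1 - b2) (b2 - b3) (b3 - b4) (b4 - b5) b5 _ _
        (by intro t; rw [heval]; ring)]
    norm_num; try ring

/-- Every polynomial of degree at most 5 is of the form `Pp b*.comp (Tp xi Δx)`. -/
private theorem repr5 (xi Δx : ℝ) (h : Δx ≠ 0) (q : Polynomial ℝ) (hq : q.degree ≤ 5) :
    ∃ b0 b1 b2 b3 b4 b5 : ℝ, q = (Pp b0 b1 b2 b3 b4 b5).comp (Tp xi Δx) := by
  set p : Polynomial ℝ := q.comp (C Δx * X + C xi) with hp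
  have hAT : (C Δx * X + C xi).comp (Tp xi Δx) = X := by
    rw [add_comp, mul_comp, C_comp, C_comp, X_comp]
    unfold Tp
    calc C Δx * ((X - C xi) * C Δx⁻¹) + C xi
        = C Δx * C Δx⁻¹ * (X - C xi) + C xi := by ring
      _ = C (Δx * Δx⁻¹) * (X - C xi) + C xi := by rw [C_mul]
      _ = X := by rw [mul_inv_cancel₀ h, C_1]; ring
  have hqp : q = p.comp (Tp xi Δx) := by
    rw [hp, Polynomial.comp_assoc, hAT, comp_X]
  have hdeg : p.natDegree < 6 := by
    have h1 : p.natDegree ≤ q.natDegree * (C Δx * X + C xi).natDegree :=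
      Polynomial.natDegree_comp_le
    have h2 : (C Δx * X + C xi).natDegree = 1 := Polynomial.natDegree_linear h
    have h3 : q.natDegree ≤ 5 := Polynomial.natDegree_le_iff_degree_le.mpr (by exact_mod_cast hq)
    rw [h2, mul_one] at h1
    omega
  refine ⟨p.coeff 0, p.coeff 1, p.coeff 2, p.coeff 3, p.coeff 4, p.coeff 5, ?_⟩
  have hsum : p = Pp (p.coeff 0) (p.coeff 1) (p.coeff 2) (p.coeff 3) (p.coeff 4) (p.coeff 5) := by
    conv_lhs => rw [p.as_sum_range' 6 hdeg]
    simp [Pp, Finset.sum_range_succ, ← Polynomial.C_mul_X_pow_eq_monomial]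
    try ring
  rw [hqp, ← hsum]

set_option maxHeartbeats 2000000 in
theorem stmt11 (xi Δx : ℝ) (hΔx : 0 < Δx) (ubm ub ubp vbm vb vbp : ℝ) :
    (∃! q : Polynomial ℝ, q.degree ≤ 5 ∧
      cellAvg (xi - Δx) Δx q = ubm ∧ cellAvg xi Δx q = ub ∧ cellAvg (xi + Δx) Δx q = ubp ∧
      cellMoment (xi - Δx) Δx q = vbm ∧ cellMoment xi Δx q = vb ∧
      cellMoment (xi + Δx) Δx q = vbp) ∧
    (∀ q : Polynomial ℝ, q.degree ≤ 5 →
      cellAvg (xi - Δx) Δx q = ubm → cellAvg xi Δx q = ub → cellAvg (xi + Δx) Δx q = ubp →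
      cellMoment (xi - Δx) Δx q = vbm → cellMoment xi Δx q = vb →
      cellMoment (xi + Δx) Δx q = vbp →
      q.eval (xi + Δx / 2) =
        (13 / 108) * ubm + (7 / 12) * ub + (8 / 27) * ubp
          + (25 / 54) * vbm + (241 / 54) * vb - (28 / 27) * vbp) := by
  have h : Δx ≠ 0 := ne_of_gt hΔx
  -- explicit solution coefficients
  set B0 : ℝ := (-43/384)*ubm + (235/192)*ub + (-43/384)*ubp + (-27/64)*vbm + (27/64)*vbp with hB0
  set B1 : ℝ := (167/576)*ubm + (-167/576)*ubp + (281/288)*vbm + (2449/144)*vb + (281/288)*vbp with hB1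
  set B2 : ℝ := (23/16)*ubm + (-23/8)*ub + (23/16)*ubp + (45/8)*vbm + (-45/8)*vbp with hB2
  set B3 : ℝ := (-455/216)*ubm + (455/216)*ubp + (-785/108)*vbm + (-1945/54)*vb + (-785/108)*vbp with hB3
  set B4 : ℝ := (-5/8)*ubm + (5/4)*ub + (-5/8)*ubp + (-15/4)*vbm + (15/4)*vbp with hB4
  set B5 : ℝ := (35/36)*ubm + (-35/36)*ubp + (77/18)*vbm + (133/9)*vb + (77/18)*vbp with hB5
  obtain ⟨hdeg0, heval0, ha1, ha2, ha3, hm1, hm2, hm3⟩ := table xi Δx h B0 B1 B2 B3 B4 B5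
  set q₀ : Polynomial ℝ := (Pp B0 B1 B2 B3 B4 B5).comp (Tp xi Δx) with hq₀
  have hsat : q₀.degree ≤ 5 ∧
      cellAvg (xi - Δx) Δx q₀ = ubm ∧ cellAvg xi Δx q₀ = ub ∧ cellAvg (xi + Δx) Δx q₀ = ubp ∧
      cellMoment (xi - Δx) Δx q₀ = vbm ∧ cellMoment xi Δx q₀ = vb ∧
      cellMoment (xi + Δx) Δx q₀ = vbp := by
    refine ⟨hdeg0, ?_, ?_, ?_, ?_, ?_, ?_⟩
    · rw [ha1, hB0, hB1, hB2, hB3, hB4, hB5]; ring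
    · rw [ha2, hB0, hB2, hB4]; ring
    · rw [ha3, hB0, hB1, hB2, hB3, hB4, hB5]; ring
    · rw [hm1, hB1, hB2, hB3, hB4, hB5]; ring
    · rw [hm2, hB1, hB3, hB5]; ring
    · rw [hm3, hB1, hB2, hB3, hB4, hB5]; ring
  have key : ∀ q : Polynomial ℝ, q.degree ≤ 5 →
      cellAvg (xi - Δx) Δx q = ubm → cellAvg xi Δx q = ub → cellAvg (xi + Δx) Δx q = ubp →
      cellMoment (xi - Δx) Δx q = vbm → cellMoment xi Δx q = vb →
      cellMoment (xi + Δx) Δx q = vbp → q = q₀ := by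
    intro q hd e1 e2 e3 e4 e5 e6
    obtain ⟨c0, c1, c2, c3, c4, c5, hrep⟩ := repr5 xi Δx h q hd
    obtain ⟨_, _, ka1, ka2, ka3, km1, km2, km3⟩ := table xi Δx h c0 c1 c2 c3 c4 c5
    rw [hrep] at e1 e2 e3 e4 e5 e6
    rw [ka1] at e1; rw [ka2] at e2; rw [ka3] at e3
    rw [km1] at e4; rw [km2] at e5; rw [km3] at e6
    have hc0 : c0 = B0 := by rw [hB0]; linarith
    have hc1 : c1 = B1 := by rw [hB1]; linarith
    have hc2 : c2 = B2 := by rw [hB2]; linarith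
    have hc3 : c3 = B3 := by rw [hB3]; linarith
    have hc4 : c4 = B4 := by rw [hB4]; linarith
    have hc5 : c5 = B5 := by rw [hB5]; linarith
    rw [hrep, hc0, hc1, hc2, hc3, hc4, hc5, hq₀]
  constructor
  · exact ⟨q₀, hsat, fun q hq => key q hq.1 hq.2.1 hq.2.2.1 hq.2.2.2.1 hq.2.2.2.2.1
      hq.2.2.2.2.2.1 hq.2.2.2.2.2.2⟩
  · intro q hd e1 e2 e3 e4 e5 e6
    rw [key q hd e1 e2 e3 e4 e5 e6]
    rw [heval0, hB0, hB1, hB2, hB3, hB4, hB5]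
    ring
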